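/- Let B, A ∈ ℝ[s] with n = deg B = deg A + 2 (neutral type), leading coefficients b_n and a_m respectively, and L > 0. Along any sequence ω_k → ∞ of singular frequencies for a fixed k_P (solutions of ω k_P = −Im(B(jω)e^{jωL}/A(jω))), the corresponding boundary-line intercepts satisfy k_D-value −Re(B(jω_k)e^{jω_k L}/A(jω_k))/ω_k² → ±b_n/a_m; i.e., the boundary lines k_I − ω²k_D = −Re(B(jω)e^{jωL}/A(jω)) converge (after dividing by ω²) to the infinity root boundaries k_D = ±b_n/a_m. -/

import Mathlib

open Polynomial Filter

lemma aux_aeval_div_pow (p : Polynomial ℝ) (z : ℕ → ℂ) (hz : ∀ k, z k ≠ 0)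
    (htop : Tendsto (fun k => ‖z k‖) atTop atTop) :
    Tendsto (fun k => Polynomial.aeval (z k) p / (z k) ^ p.natDegree) atTop
      (nhds (p.leadingCoeff : ℂ)) := by
  set n := p.natDegree
  have hsum : ∀ k, Polynomial.aeval (z k) p / (z k) ^ n
      = ∑ i ∈ Finset.range (n + 1), (p.coeff i : ℂ) * ((z k) ^ i / (z k) ^ n) := by
    intro k
    rw [Polynomial.aeval_eq_sum_range, Finset.sum_div]
    congr 1; ext i
    rw [Algebra.smul_def]
    simp [Complex.coe_algebraMap, mul_div_assoc]
  simp only [hsum]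
  have hlim : Tendsto (fun k => ∑ i ∈ Finset.range (n + 1),
      (p.coeff i : ℂ) * ((z k) ^ i / (z k) ^ n)) atTop
      (nhds (∑ i ∈ Finset.range (n + 1),
        if i = n then (p.leadingCoeff : ℂ) else 0)) := by
    apply tendsto_finset_sum
    intro i hi
    rcases eq_or_lt_of_le (Nat.lt_succ_iff.mp (Finset.mem_range.mp hi)) with h | h
    · subst h
      simp only [if_pos rfl]
      have : (fun k => (p.coeff n : ℂ) * ((z k) ^ n / (z k) ^ n))
          = fun k => (p.leadingCoeff : ℂ) := by
        ext k; rw [div_self (pow_ne_zero _ (hz k)), mul_one, Polynomial.leadingCoeff]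
      rw [this]; exact tendsto_const_nhds
    · simp only [if_neg (Nat.ne_of_lt h)]
      rw [show (0 : ℂ) = (p.coeff i : ℂ) * 0 by ring]
      apply Tendsto.const_mul
      have heq : ∀ k, (z k) ^ i / (z k) ^ n = ((z k) ^ (n - i))⁻¹ := by
        intro k
        rw [inv_eq_one_div, div_eq_div_iff (pow_ne_zero _ (hz k)) (pow_ne_zero _ (hz k)),
          one_mul, ← pow_add, Nat.add_sub_cancel' h.le]
      simp only [heq]
      rw [tendsto_zero_iff_norm_tendsto_zero]
      simp only [norm_inv, norm_pow]
      apply Tendsto.inv_tendsto_atTop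
      exact (tendsto_pow_atTop (Nat.sub_ne_zero_of_lt h)).comp htop
  convert hlim using 2
  rw [Finset.sum_ite_eq' (Finset.range (n+1)) n (fun _ => (p.leadingCoeff : ℂ))]
  simp

theorem infinity_root_boundaries (A B : Polynomial ℝ) (L kP : ℝ) (hL : 0 < L)
    (hA : A ≠ 0) (hB : B ≠ 0) (hneutral : B.natDegree = A.natDegree + 2)
    (ω : ℕ → ℝ) (hpos : ∀ k, 0 < ω k)
    (hAne : ∀ k, Polynomial.aeval ((ω k : ℂ) * Complex.I) A ≠ 0)
    (htop : Tendsto ω atTop atTop)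
    (hsing : ∀ k, ω k * kP
        = -(Polynomial.aeval ((ω k : ℂ) * Complex.I) B
            * Complex.exp ((L : ℂ) * ((ω k : ℂ) * Complex.I))
            / Polynomial.aeval ((ω k : ℂ) * Complex.I) A).im) :
    Tendsto (fun k =>
        min (|(-(Polynomial.aeval ((ω k : ℂ) * Complex.I) B
                  * Complex.exp ((L : ℂ) * ((ω k : ℂ) * Complex.I))
                  / Polynomial.aeval ((ω k : ℂ) * Complex.I) A).re) / (ω k)^2
              - B.leadingCoeff / A.leadingCoeff|)
            (|(-(Polynomial.aeval ((ω k : ℂ) * Complex.I) B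
                  * Complex.exp ((L : ℂ) * ((ω k : ℂ) * Complex.I))
                  / Polynomial.aeval ((ω k : ℂ) * Complex.I) A).re) / (ω k)^2
              + B.leadingCoeff / A.leadingCoeff|))
      atTop (nhds 0) := by
  set z : ℕ → ℂ := fun k => (ω k : ℂ) * Complex.I with hzdef
  have hz : ∀ k, z k ≠ 0 := by
    intro k
    exact mul_ne_zero (by exact_mod_cast (hpos k).ne') Complex.I_ne_zero
  have hznorm : Tendsto (fun k => ‖z k‖) atTop atTop := by
    have : ∀ k, ‖z k‖ = ω k := by
      intro k
      simp [hzdef, abs_of_pos (hpos k)]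
    simpa only [this] using htop
  set f : ℕ → ℂ := fun k => Polynomial.aeval (z k) B
      * Complex.exp ((L : ℂ) * z k) / Polynomial.aeval (z k) A with hfdef
  set c : ℝ := B.leadingCoeff / A.leadingCoeff with hcdef
  have haM : A.leadingCoeff ≠ 0 := Polynomial.leadingCoeff_ne_zero.mpr hA
  -- the key ratio limit
  have hBz := aux_aeval_div_pow B z hz hznorm
  have hAz := aux_aeval_div_pow A z hz hznorm
  have hratio : Tendsto (fun k => Polynomial.aeval (z k) B / Polynomial.aeval (z k) A
      / ((ω k : ℂ)^2)) atTop (nhds (-(c : ℂ))) := by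
    have hq : Tendsto (fun k => (Polynomial.aeval (z k) B / (z k) ^ B.natDegree)
        / (Polynomial.aeval (z k) A / (z k) ^ A.natDegree)) atTop
        (nhds ((B.leadingCoeff : ℂ) / (A.leadingCoeff : ℂ))) :=
      hBz.div hAz (by exact_mod_cast haM)
    have heq : ∀ k, Polynomial.aeval (z k) B / Polynomial.aeval (z k) A / ((ω k : ℂ)^2)
        = -((Polynomial.aeval (z k) B / (z k) ^ B.natDegree)
            / (Polynomial.aeval (z k) A / (z k) ^ A.natDegree)) := by
      intro k
      have hz2 : (z k) ^ 2 = -((ω k : ℂ)^2) := by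
        simp [hzdef, mul_pow, Complex.I_sq]
      have hzn : (z k) ^ B.natDegree = (z k) ^ A.natDegree * (-((ω k : ℂ)^2)) := by
        rw [hneutral, pow_add, hz2]
      have hω : ((ω k : ℂ))^2 ≠ 0 := pow_ne_zero _ (by
        exact_mod_cast (hpos k).ne')
      have key : ∀ (b a w u : ℂ), u ≠ 0 → a ≠ 0 → w ≠ 0 →
          b / a / u = -((b / (w * -u)) / (a / w)) := by
        intro b a w u hu ha hw
        field_simp
      have := key (Polynomial.aeval (z k) B) (Polynomial.aeval (z k) A)
        ((z k) ^ A.natDegree) (((ω k : ℂ))^2) hω (hAne k) (pow_ne_zero _ (hz k))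
      rw [this, hzn]
    simp only [heq]
    rw [show -(c : ℂ) = -((B.leadingCoeff : ℂ) / (A.leadingCoeff : ℂ)) by push_cast [hcdef]; ring]
    exact hq.neg
  -- norm of g := f / ω²
  set g : ℕ → ℂ := fun k => f k / ((ω k : ℂ)^2) with hgdef
  have hgnorm : Tendsto (fun k => ‖g k‖) atTop (nhds |c|) := by
    have : ∀ k, ‖g k‖ = ‖Polynomial.aeval (z k) B / Polynomial.aeval (z k) A
        / ((ω k : ℂ)^2)‖ := by
      intro k
      have : g k = (Polynomial.aeval (z k) B / Polynomial.aeval (z k) A / ((ω k : ℂ)^2))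
          * Complex.exp ((L : ℂ) * z k) := by
        simp only [hgdef, hfdef]; ring
      rw [this, norm_mul]
      have hre : ((L : ℂ) * z k).re = 0 := by
        simp [hzdef, Complex.mul_re]
      have : ‖Complex.exp ((L : ℂ) * z k)‖ = 1 := by
        rw [Complex.norm_exp, hre, Real.exp_zero]
      rw [this, mul_one]
    simp only [this]
    have h := hratio.norm
    have hc : ‖-((c:ℝ) : ℂ)‖ = |c| := by
      rw [norm_neg, Complex.norm_real, Real.norm_eq_abs]
    rwa [hc] at h
  -- imaginary part of g tends to 0
  have hgim : Tendsto (fun k => (g k).im) atTop (nhds 0) := by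
    have him : ∀ k, (g k).im = -kP / ω k := by
      intro k
      have h1 : (f k).im = -(ω k * kP) := by
        have := hsing k
        linarith
      have h2 : ((ω k : ℂ))^2 = ((ω k ^ 2 : ℝ) : ℂ) := by push_cast; ring
      show ((f k) / ((ω k : ℂ)^2)).im = -kP / ω k
      rw [h2, Complex.div_ofReal_im, h1,
        div_eq_div_iff (pow_ne_zero 2 (hpos k).ne') (hpos k).ne']
      ring
    simp only [him]
    have := (tendsto_const_nhds (x := -kP) (f := atTop (α := ℕ))).div_atTop htop
    simpa using this
  -- the real part squared tends to c²
  have hx2 : Tendsto (fun k => ((g k).re)^2) atTop (nhds (c^2)) := by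
    have hsq : ∀ k, ((g k).re)^2 = ‖g k‖^2 - ((g k).im)^2 := by
      intro k
      rw [Complex.sq_norm, Complex.normSq_apply]
      ring
    simp only [hsq]
    have h1 : Tendsto (fun k => ‖g k‖^2) atTop (nhds (|c|^2)) := hgnorm.pow 2
    have h2 : Tendsto (fun k => ((g k).im)^2) atTop (nhds 0) := by
      simpa using hgim.pow 2
    have := h1.sub h2
    simpa [sq_abs] using this
  -- reduce the goal to g.re
  have hxeq : ∀ k, (-(f k).re) / (ω k)^2 = -((g k).re) := by
    intro k
    have h2 : ((ω k : ℂ))^2 = ((ω k ^ 2 : ℝ) : ℂ) := by push_cast; ring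
    rw [hgdef]
    simp only [h2, Complex.div_ofReal_re]
    ring
  have hgoal : Tendsto (fun k => min (|-((g k).re) - c|) (|-((g k).re) + c|)) atTop
      (nhds 0) := by
    set x : ℕ → ℝ := fun k => -((g k).re) with hxdef
    have hub : ∀ k, min (|x k - c|) (|x k + c|) ≤ Real.sqrt |(x k)^2 - c^2| := by
      intro k
      have hmin : (min (|x k - c|) (|x k + c|))^2 ≤ |x k - c| * |x k + c| := by
        rcases min_cases (|x k - c|) (|x k + c|) with ⟨h, h'⟩ | ⟨h, h'⟩ <;>
          rw [h] <;> nlinarith [abs_nonneg (x k - c), abs_nonneg (x k + c)]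
      calc min (|x k - c|) (|x k + c|)
          = Real.sqrt ((min (|x k - c|) (|x k + c|))^2) := by
            rw [Real.sqrt_sq (le_min (abs_nonneg _) (abs_nonneg _))]
        _ ≤ Real.sqrt (|x k - c| * |x k + c|) := Real.sqrt_le_sqrt hmin
        _ = Real.sqrt |(x k)^2 - c^2| := by
            rw [← abs_mul]; congr 1; ring
    have hlb : ∀ k, (0:ℝ) ≤ min (|x k - c|) (|x k + c|) :=
      fun k => le_min (abs_nonneg _) (abs_nonneg _)
    have hsqrt : Tendsto (fun k => Real.sqrt |(x k)^2 - c^2|) atTop (nhds 0) := by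
      have hx2' : Tendsto (fun k => (x k)^2) atTop (nhds (c^2)) := by
        simpa [hxdef, neg_pow] using hx2
      have : Tendsto (fun k => |(x k)^2 - c^2|) atTop (nhds 0) := by
        have := (hx2'.sub (tendsto_const_nhds (x := c^2))).abs
        simpa using this
      have := (Real.continuous_sqrt.tendsto 0).comp this
      simpa [Function.comp_def] using this
    exact tendsto_of_tendsto_of_tendsto_of_le_of_le tendsto_const_nhds hsqrt hlb hub
  have : (fun k =>
        min (|(-(Polynomial.aeval ((ω k : ℂ) * Complex.I) B
                  * Complex.exp ((L : ℂ) * ((ω k : ℂ) * Complex.I))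
                  / Polynomial.aeval ((ω k : ℂ) * Complex.I) A).re) / (ω k)^2
              - B.leadingCoeff / A.leadingCoeff|)
            (|(-(Polynomial.aeval ((ω k : ℂ) * Complex.I) B
                  * Complex.exp ((L : ℂ) * ((ω k : ℂ) * Complex.I))
                  / Polynomial.aeval ((ω k : ℂ) * Complex.I) A).re) / (ω k)^2
              + B.leadingCoeff / A.leadingCoeff|))
      = fun k => min (|-((g k).re) - c|) (|-((g k).re) + c|) := by
    funext k
    rw [← hxeq k]
  rw [this]
  exact hgoal
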